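/- Let M be an abelian group and let r : UM → (UM)^{ab} ⊗ ℤ/2ℤ (the abelianization of UM modulo squares) denote the natural map. For every abelian group N with 2N = 0 and every quadratic map q : M → N there exists a unique group homomorphism f : (UM)^{ab} ⊗ ℤ/2ℤ → N with f(r(s(m))) = q(m) for all m ∈ M; that is, r ∘ s : M → (UM)^{ab} ⊗ ℤ/2ℤ is the universal quadratic map out of M to an abelian group killed by 2. -/

import Mathlib

open scoped TensorProduct

/-- The group `UM`: the kernel of `(T^{<3}M)^× → ℤ^× = {±1}`, where
`T^{<3}M = ℤ ⊕ M ⊕ (M ⊗_ℤ M)` is the tensor algebra of `M` over `ℤ` truncated in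
degrees `< 3`.  An element `1 + m + t` (with `m : M`, `t : M ⊗[ℤ] M`) is encoded
as the pair `⟨m, t⟩`, and the multiplication is
`(1+m+t)(1+m'+t') = 1 + (m+m') + (m ⊗ m' + t + t')`. -/
@[ext]
structure UGroup (M : Type) [AddCommGroup M] where
  m : M
  t : TensorProduct ℤ M M

namespace UGroup

variable {M : Type} [AddCommGroup M]

noncomputable instance : Mul (UGroup M) :=
  ⟨fun x y => ⟨x.m + y.m, x.m ⊗ₜ[ℤ] y.m + x.t + y.t⟩⟩
noncomputable instance : One (UGroup M) := ⟨⟨0, 0⟩⟩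
noncomputable instance : Inv (UGroup M) :=
  ⟨fun x => ⟨-x.m, x.m ⊗ₜ[ℤ] x.m - x.t⟩⟩

@[simp] lemma mul_m (x y : UGroup M) : (x * y).m = x.m + y.m := rfl
@[simp] lemma mul_t (x y : UGroup M) : (x * y).t = x.m ⊗ₜ[ℤ] y.m + x.t + y.t := rfl
@[simp] lemma one_m : (1 : UGroup M).m = 0 := rfl
@[simp] lemma one_t : (1 : UGroup M).t = 0 := rfl
@[simp] lemma inv_m (x : UGroup M) : (x⁻¹).m = -x.m := rfl
@[simp] lemma inv_t (x : UGroup M) : (x⁻¹).t = x.m ⊗ₜ[ℤ] x.m - x.t := rfl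

noncomputable instance : Group (UGroup M) where
  mul_assoc x y z := by
    ext
    · simp [add_assoc]
    · simp [TensorProduct.add_tmul, TensorProduct.tmul_add]
      abel
  one_mul x := by ext <;> simp
  mul_one x := by ext <;> simp
  inv_mul_cancel x := by
    ext
    · simp
    · simp [TensorProduct.neg_tmul]
      abel

/-- The set-theoretic section `s : M → UM`, `m ↦ 1 + m`. -/
noncomputable def s (m : M) : UGroup M := ⟨m, 0⟩

end UGroup

/-- A quadratic map `q : M → N` of abelian groups: a function such that
`(m, m') ↦ q(m+m') − q(m) − q(m')` is ℤ-bilinear (i.e. bi-additive). -/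
def IsQuadraticMap {M N : Type} [AddCommGroup M] [AddCommGroup N] (q : M → N) : Prop :=
  (∀ m₁ m₂ m' : M,
      q (m₁ + m₂ + m') - q (m₁ + m₂) - q m' =
        (q (m₁ + m') - q m₁ - q m') + (q (m₂ + m') - q m₂ - q m')) ∧
  (∀ m m₁' m₂' : M,
      q (m + (m₁' + m₂')) - q m - q (m₁' + m₂') =
        (q (m + m₁') - q m - q m₁') + (q (m + m₂') - q m - q m₂'))

/-- The (normal) subgroup of `UM` generated by all commutators and all squares,
so that the quotient is `(UM)^{ab} ⊗ ℤ/2ℤ`, the abelianization of `UM` modulo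
squares. -/
noncomputable def commSq (M : Type) [AddCommGroup M] : Subgroup (UGroup M) :=
  Subgroup.normalClosure
    {x : UGroup M | (∃ a b : UGroup M, x = a * b * a⁻¹ * b⁻¹) ∨ (∃ a : UGroup M, x = a * a)}

instance (M : Type) [AddCommGroup M] : (commSq M).Normal :=
  Subgroup.normalClosure_normal


section Aux

open TensorProduct

variable {M N : Type} [AddCommGroup M] [AddCommGroup N]

/-- The bilinear map `(m, m') ↦ q(m+m') - q m - q m'` associated to a quadratic map. -/
noncomputable def qBilin (q : M → N) (hq : IsQuadraticMap q) : M →ₗ[ℤ] M →ₗ[ℤ] N :=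
  (AddMonoidHom.mk' (fun m =>
      ((AddMonoidHom.mk' (fun m' => q (m + m') - q m - q m')
        (fun a b => hq.2 m a b)).toIntLinearMap))
    (fun m₁ m₂ => LinearMap.ext fun m' => hq.1 m₁ m₂ m')).toIntLinearMap

@[simp] lemma qBilin_apply (q : M → N) (hq : IsQuadraticMap q) (m m' : M) :
    qBilin q hq m m' = q (m + m') - q m - q m' := rfl

lemma q_zero (q : M → N) (hq : IsQuadraticMap q) : q 0 = 0 := by
  have h := hq.2 0 0 0
  simp only [add_zero] at h
  abel_nf at h
  simpa [two_smul, ← add_assoc] using sub_eq_zero_of_eq h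

/-- UGroup M is generated by the section `s`. -/
lemma UGroup.closure_range_s : Subgroup.closure (Set.range (UGroup.s : M → UGroup M)) = ⊤ := by
  rw [eq_top_iff]
  rintro ⟨m, t⟩ -
  have h0 : ∀ t : TensorProduct ℤ M M,
      (⟨0, t⟩ : UGroup M) ∈ Subgroup.closure (Set.range UGroup.s) := by
    intro t
    induction t using TensorProduct.induction_on with
    | zero => exact (show ((⟨0, 0⟩ : UGroup M)) = 1 from rfl) ▸ one_mem _
    | tmul a b =>
      have h : (⟨0, a ⊗ₜ[ℤ] b⟩ : UGroup M) = UGroup.s a * UGroup.s b * (UGroup.s (a + b))⁻¹ := by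
        ext
        · simp [UGroup.s]
        · simp [UGroup.s, TensorProduct.add_tmul, TensorProduct.tmul_add, TensorProduct.tmul_neg,
            TensorProduct.neg_tmul]
          abel
      rw [h]
      exact mul_mem (mul_mem (Subgroup.subset_closure ⟨a, rfl⟩)
        (Subgroup.subset_closure ⟨b, rfl⟩)) (inv_mem (Subgroup.subset_closure ⟨a + b, rfl⟩))
    | add t t' ht ht' =>
      have h : (⟨0, t + t'⟩ : UGroup M) = (⟨0, t⟩ : UGroup M) * ⟨0, t'⟩ := by
        ext <;> simp
      rw [h]; exact mul_mem ht ht'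
  have h : (⟨m, t⟩ : UGroup M) = UGroup.s m * ⟨0, t⟩ := by
    ext <;> simp [UGroup.s]
  rw [h]
  exact mul_mem (Subgroup.subset_closure ⟨m, rfl⟩) (h0 t)

end Aux

open scoped commutatorElement

/-- (Corollary 2.3, second part.)  The natural map
`r ∘ s : M → (UM)^{ab} ⊗ ℤ/2ℤ` is universal for quadratic maps from `M` to an
abelian group killed by `2`: for every abelian group `N` with `2N = 0` and every
quadratic map `q : M → N`, there is a unique group homomorphism
`f : (UM)^{ab} ⊗ ℤ/2ℤ → N` with `f(r(s(m))) = q(m)` for all `m`. -/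
theorem self_cup_stmt_3 (M : Type) [AddCommGroup M] (N : Type) [AddCommGroup N]
    (h2 : ∀ n : N, n + n = 0)
    (q : M → N) (hq : IsQuadraticMap q) :
    ∃! f : (UGroup M ⧸ commSq M) →* Multiplicative N,
      ∀ m : M,
        f (QuotientGroup.mk (UGroup.s m)) = Multiplicative.ofAdd (q m) := by

  classical
  have hq0 : q 0 = 0 := q_zero q hq
  set b : TensorProduct ℤ M M →ₗ[ℤ] N := -(TensorProduct.lift (qBilin q hq)) with hb
  have hbt : ∀ a c : M, b (a ⊗ₜ[ℤ] c) = -(q (a + c) - q a - q c) := fun a c => by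
    rw [hb]
    exact congrArg Neg.neg (TensorProduct.lift.tmul (f' := qBilin q hq) a c)
  -- the homomorphism on UGroup M
  set F : UGroup M →* Multiplicative N :=
    { toFun := fun x => Multiplicative.ofAdd (q x.m + b x.t)
      map_one' := by simp [hq0]
      map_mul' := fun x y => by
        simp only [UGroup.mul_m, UGroup.mul_t, map_add, hbt]
        rw [← ofAdd_add]
        congr 1
        abel } with hF
  have hFapp : ∀ x : UGroup M, F x = Multiplicative.ofAdd (q x.m + b x.t) := fun _ => rfl
  have hker : commSq M ≤ F.ker := by
    apply Subgroup.normalClosure_le_normal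
    rintro x (⟨a, c, rfl⟩ | ⟨a, rfl⟩)
    · have h : a * c * a⁻¹ * c⁻¹ = ⁅a, c⁆ := rfl
      rw [SetLike.mem_coe, MonoidHom.mem_ker, h, map_commutatorElement,
        commutatorElement_eq_one_iff_mul_comm]
      exact mul_comm _ _
    · rw [SetLike.mem_coe, MonoidHom.mem_ker, hFapp]
      simp only [UGroup.mul_m, UGroup.mul_t, map_add, hbt]
      rw [show (1 : Multiplicative N) = Multiplicative.ofAdd (0 : N) from rfl]
      congr 1
      have h := h2 (q a.m + b a.t)
      rw [← h]
      abel
  refine ⟨QuotientGroup.lift (commSq M) F hker, fun m => ?_, ?_⟩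
  · rw [QuotientGroup.lift_mk]
    show Multiplicative.ofAdd (q m + b 0) = _
    simp
  · intro g hg
    refine MonoidHom.ext fun x => ?_
    have htop : Subgroup.closure
        ((QuotientGroup.mk' (commSq M)) '' Set.range (UGroup.s : M → UGroup M)) = ⊤ := by
      rw [← MonoidHom.map_closure, UGroup.closure_range_s, ← MonoidHom.range_eq_map]
      exact MonoidHom.range_eq_top_of_surjective _ (QuotientGroup.mk'_surjective _)
    have hx : x ∈ Subgroup.closure
        ((QuotientGroup.mk' (commSq M)) '' Set.range (UGroup.s : M → UGroup M)) := by
      rw [htop]; trivial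
    induction hx using Subgroup.closure_induction with
    | mem y hy =>
      obtain ⟨-, ⟨m, rfl⟩, rfl⟩ := hy
      rw [QuotientGroup.mk'_apply, hg m, QuotientGroup.lift_mk]
      show _ = Multiplicative.ofAdd (q m + b 0)
      simp
    | one => simp
    | mul y z hy hz ihy ihz => simp [map_mul, ihy, ihz]
    | inv y hy ihy => simp [map_inv, ihy]
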